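/- arXiv:2310.20382 — 2 statements merged into one kernel-verified Lean document; each statement's English description precedes it below -/
import Mathlib

section
/- Local well-posedness of the discrete nonlinear Schrödinger equation in l^p_h: Let d ≥ 1, h > 0, σ > 0, λ ∈ {1,−1}, 1 ≤ p ≤ ∞, and let V = {V_n} ∈ l^∞_h be a bounded real-valued potential. For every u_0 ∈ l^p_h there exists T > 0, depending only on d, h, σ, p, ‖V‖_{l^∞_h} and ‖u_0‖_{l^p_h}, such that: (i) there exists a continuously differentiable map u : [−T,T] → l^p_h with u(0) = u_0 satisfying, for all t ∈ [−T,T] and all n ∈ hℤ^d, i u_n'(t) − (Δ_h u(t))_n + V_n u_n(t) + λ|u_n(t)|^{2σ} u_n(t) = 0; (ii) this solution is unique among continuously differentiable maps [−T,T] → l^p_h; (iii) for every R > 0 there exist T = T(R) > 0 and L > 0 such that any two such solutions u, v on [−T,T] with initial data u_0, v_0 of l^p_h-norm at most R satisfy sup_{|t| ≤ T} ‖u(t) − v(t)‖_{l^p_h} ≤ L ‖u_0 − v_0‖_{l^p_h}. -/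
open Real



noncomputable section

open scoped ENNReal

/-- The integer lattice indexing `hℤ^d` (the point `n ∈ hℤ^d` corresponds to `h • n`). -/
abbrev ZLat (d : ℕ) := Fin d → ℤ

/-- The `j`-th standard basis vector of the lattice. -/
def latE {d : ℕ} (j : Fin d) : ZLat d := Pi.single j 1

/-- The discrete Laplacian `Δ_h` on `ℂ`-valued sequences on `hℤ^d`, acting pointwise:
`(Δ_h u)_n = h⁻² Σ_j (u_{n+he_j} + u_{n−he_j} − 2u_n)`. -/
def discLapC (d : ℕ) (h : ℝ) (u : ZLat d → ℂ) : ZLat d → ℂ :=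
  fun n => (∑ j : Fin d, (u (n + latE j) + u (n - latE j) - 2 * u n)) / (h : ℂ) ^ 2

/-- `u : ℝ → l^p_h` is a continuously differentiable solution (with derivative `u'`) of the
discrete nonlinear Schrödinger equation
`i u_n'(t) − (Δ_h u(t))_n + V_n u_n(t) + λ |u_n(t)|^{2σ} u_n(t) = 0` on the set `S ⊆ ℝ`. -/
def IsDNLSSolutionOn (d : ℕ) (h σ lam : ℝ) (V : ZLat d → ℝ) (p : ℝ≥0∞) [Fact (1 ≤ p)]
    (S : Set ℝ) (u u' : ℝ → lp (fun _ : ZLat d => ℂ) p) : Prop :=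
  (∀ t ∈ S, HasDerivWithinAt u (u' t) S t) ∧ ContinuousOn u' S ∧
    ∀ t ∈ S, ∀ n : ZLat d,
      Complex.I * (u' t : ZLat d → ℂ) n - discLapC d h (⇑(u t)) n
          + (V n : ℂ) * (u t : ZLat d → ℂ) n
          + (lam : ℂ) * ((‖(u t : ZLat d → ℂ) n‖ ^ (2 * σ) : ℝ) : ℂ)
            * (u t : ZLat d → ℂ) n = 0


end


/-- For `0 ≤ y ≤ x ≤ R` and `s > 0`, `(x^s - y^s) * y ≤ s * R^s * (x - y)`. -/
lemma rpow_sub_rpow_mul_le {s R x y : ℝ} (hs : 0 < s) (hy : 0 ≤ y) (hyx : y ≤ x)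
    (hxR : x ≤ R) : (x ^ s - y ^ s) * y ≤ s * R ^ s * (x - y) := by
  have hx : 0 ≤ x := hy.trans hyx
  have hR : 0 ≤ R := hx.trans hxR
  have hRs : 0 ≤ R ^ s := rpow_nonneg hR s
  have hxy0 : 0 ≤ x - y := sub_nonneg.2 hyx
  rcases eq_or_lt_of_le hy with rfl | hy0
  · rw [mul_zero]
    have := mul_nonneg (mul_nonneg hs.le hRs) hxy0
    linarith
  rcases le_or_gt s 1 with hs1 | hs1
  · -- concave case: x^s ≤ y^s + s * y^(s-1) * (x-y) via Bernoulli
    set u := (x - y) / y with hu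
    have hu0 : 0 ≤ u := div_nonneg hxy0 hy0.le
    have hxy : x = y * (1 + u) := by
      rw [hu, mul_add, mul_one, mul_div_cancel₀ _ hy0.ne']; ring
    have hb : (1 + u) ^ s ≤ 1 + s * u :=
      rpow_one_add_le_one_add_mul_self (by linarith) hs.le hs1
    have hxs : x ^ s ≤ y ^ s * (1 + s * u) := by
      rw [hxy, mul_rpow hy0.le (by linarith)]
      exact mul_le_mul_of_nonneg_left hb (rpow_nonneg hy0.le s)
    have hys : y ^ s ≤ R ^ s := rpow_le_rpow hy (hyx.trans hxR) hs.le
    have huy : u * y = x - y := by rw [hu, div_mul_cancel₀ _ hy0.ne']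
    have h1 : (x ^ s - y ^ s) * y ≤ y ^ s * (s * u) * y := by
      nlinarith [rpow_nonneg hy0.le s]
    calc (x ^ s - y ^ s) * y ≤ y ^ s * (s * u) * y := h1
      _ = s * y ^ s * (x - y) := by rw [← huy]; ring
      _ ≤ s * R ^ s * (x - y) := by gcongr
  · -- convex case: x^s - y^s ≤ s * x^s * (x-y)/x
    have hx0 : 0 < x := lt_of_lt_of_le hy0 hyx
    set t := (x - y) / x with ht
    have ht0 : 0 ≤ t := div_nonneg hxy0 hx0.le
    have ht1 : t ≤ 1 := by rw [ht, div_le_one hx0]; linarith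
    have hyt : y = x * (1 - t) := by
      rw [ht, mul_sub, mul_one, mul_div_cancel₀ _ hx0.ne']; ring
    have hb : 1 + s * (-t) ≤ (1 + (-t)) ^ s :=
      one_add_mul_self_le_rpow_one_add (by rw [ht]; rw [neg_le, neg_neg, div_le_one hx0]; linarith)
        hs1.le
    have hys : x ^ s * (1 - s * t) ≤ y ^ s := by
      rw [hyt, mul_rpow hx0.le (by linarith)]
      have h1t : (1 : ℝ) + -t = 1 - t := by ring
      rw [h1t] at hb
      have := mul_le_mul_of_nonneg_left hb (rpow_nonneg hx0.le s)
      calc x ^ s * (1 - s * t) = x ^ s * (1 + s * (-t)) := by ring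
        _ ≤ x ^ s * (1 - t) ^ s := this
    have hxs : 0 ≤ x ^ s := rpow_nonneg hx0.le s
    have hxsR : x ^ s ≤ R ^ s := rpow_le_rpow hx0.le hxR hs.le
    have hty : t * y ≤ x - y := by
      rw [ht, div_mul_eq_mul_div, div_le_iff₀ hx0]
      nlinarith
    calc (x ^ s - y ^ s) * y ≤ x ^ s * (s * t) * y := by nlinarith
      _ = s * x ^ s * (t * y) := by ring
      _ ≤ s * x ^ s * (x - y) := by gcongr
      _ ≤ s * R ^ s * (x - y) := by gcongr

/-- Auxiliary: the map `z ↦ |z|^s z` with ordering hypothesis. -/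
lemma nlc_lip_aux {s R : ℝ} (hs : 0 < s) {a b : ℂ}
    (ha : ‖a‖ ≤ R) (hb : ‖b‖ ≤ R) (hba : ‖b‖ ≤ ‖a‖) :
    ‖((‖a‖ ^ s : ℝ) : ℂ) * a - ((‖b‖ ^ s : ℝ) : ℂ) * b‖
      ≤ (s + 1) * R ^ s * ‖a - b‖ := by
  have h0a : (0:ℝ) ≤ ‖a‖ := norm_nonneg a
  have h0b : (0:ℝ) ≤ ‖b‖ := norm_nonneg b
  have hR : 0 ≤ R := h0a.trans ha
  have hRs : 0 ≤ R ^ s := rpow_nonneg hR s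
  have key : ((‖a‖ ^ s : ℝ) : ℂ) * a - ((‖b‖ ^ s : ℝ) : ℂ) * b
      = ((‖a‖ ^ s : ℝ) : ℂ) * (a - b)
        + (((‖a‖ ^ s - ‖b‖ ^ s : ℝ)) : ℂ) * b := by
    push_cast; ring
  rw [key]
  have habs : ‖a‖ - ‖b‖ ≤ ‖a - b‖ := by
    simpa using norm_sub_norm_le a b
  have hmono : ‖b‖ ^ s ≤ ‖a‖ ^ s := rpow_le_rpow h0b hba hs.le
  calc ‖_‖ ≤ ‖((‖a‖ ^ s : ℝ) : ℂ) * (a - b)‖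
        + ‖(((‖a‖ ^ s - ‖b‖ ^ s : ℝ)) : ℂ) * b‖ :=
        norm_add_le _ _
    _ = ‖a‖ ^ s * ‖a - b‖
        + (‖a‖ ^ s - ‖b‖ ^ s) * ‖b‖ := by
        rw [norm_mul, norm_mul, Complex.norm_real, Complex.norm_real, Real.norm_eq_abs, Real.norm_eq_abs,
          abs_of_nonneg (rpow_nonneg h0a s), abs_of_nonneg (by linarith)]
    _ ≤ R ^ s * ‖a - b‖ + s * R ^ s * (‖a‖ - ‖b‖) := by
        gcongr ?_ + ?_
        · exact mul_le_mul_of_nonneg_right (rpow_le_rpow h0a ha hs.le) (norm_nonneg _)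
        · exact rpow_sub_rpow_mul_le hs h0b hba ha
    _ ≤ R ^ s * ‖a - b‖ + s * R ^ s * ‖a - b‖ := by
        have := mul_nonneg hs.le hRs
        nlinarith
    _ = (s + 1) * R ^ s * ‖a - b‖ := by ring

/-- The map `z ↦ |z|^s z` is Lipschitz on balls. -/
lemma nlc_lip {s R : ℝ} (hs : 0 < s) {a b : ℂ}
    (ha : ‖a‖ ≤ R) (hb : ‖b‖ ≤ R) :
    ‖((‖a‖ ^ s : ℝ) : ℂ) * a - ((‖b‖ ^ s : ℝ) : ℂ) * b‖
      ≤ (s + 1) * R ^ s * ‖a - b‖ := by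
  rcases le_total (‖b‖) (‖a‖) with hba | hab
  · exact nlc_lip_aux hs ha hb hba
  · rw [← norm_neg, neg_sub, ← norm_neg (a - b), neg_sub]
    exact nlc_lip_aux hs hb ha hab

noncomputable section
open scoped ENNReal

section LpAux

variable {d : ℕ} {p : ℝ≥0∞} [Fact (1 ≤ p)]

lemma p_ne_zero : p ≠ 0 := (lt_of_lt_of_le zero_lt_one Fact.out).ne'

lemma p_cases : p = ∞ ∨ 0 < p.toReal := by
  rcases eq_or_ne p ∞ with hp | hp
  · exact Or.inl hp
  · exact Or.inr (ENNReal.toReal_pos p_ne_zero hp)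

/-- Membership by pointwise domination. -/
lemma memℓp_of_dominated {f : ZLat d → ℂ} (g : lp (fun _ : ZLat d => ℂ) p) {C : ℝ}
    (hC : 0 ≤ C) (hfg : ∀ n, ‖f n‖ ≤ C * ‖g n‖) : Memℓp f p := by
  rcases p_cases (p := p) with hp | hp
  · subst hp
    apply memℓp_infty
    refine ⟨C * ‖g‖, ?_⟩
    rintro x ⟨n, rfl⟩
    exact (hfg n).trans (mul_le_mul_of_nonneg_left (lp.norm_apply_le_norm p_ne_zero g n) hC)
  · apply memℓp_gen
    have hsum : Summable fun n => (C * ‖g n‖) ^ p.toReal := by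
      have h1 := ((lp.memℓp g).summable hp).mul_left (C ^ p.toReal)
      have h2 : (fun n : ZLat d => (C * ‖g n‖) ^ p.toReal)
          = fun n => C ^ p.toReal * ‖g n‖ ^ p.toReal :=
        funext fun n => Real.mul_rpow hC (norm_nonneg _)
      rw [h2]
      exact h1
    exact hsum.of_nonneg_of_le (fun n => Real.rpow_nonneg (norm_nonneg _) _)
      (fun n => Real.rpow_le_rpow (norm_nonneg _) (hfg n) hp.le)

/-- Norm comparison by pointwise domination. -/
lemma lp_norm_le_of_dominated {f g : lp (fun _ : ZLat d => ℂ) p} {C : ℝ}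
    (hC : 0 ≤ C) (hfg : ∀ n, ‖f n‖ ≤ C * ‖g n‖) : ‖f‖ ≤ C * ‖g‖ := by
  rcases p_cases (p := p) with hp | hp
  · subst hp
    exact lp.norm_le_of_forall_le (mul_nonneg hC (norm_nonneg _)) fun n =>
      (hfg n).trans (mul_le_mul_of_nonneg_left (lp.norm_apply_le_norm p_ne_zero g n) hC)
  · refine lp.norm_le_of_forall_sum_le hp (mul_nonneg hC (norm_nonneg _)) fun s => ?_
    calc ∑ n ∈ s, ‖f n‖ ^ p.toReal ≤ ∑ n ∈ s, (C * ‖g n‖) ^ p.toReal :=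
          Finset.sum_le_sum fun n _ =>
            Real.rpow_le_rpow (norm_nonneg _) (hfg n) hp.le
      _ = C ^ p.toReal * ∑ n ∈ s, ‖g n‖ ^ p.toReal := by
          rw [Finset.mul_sum]
          exact Finset.sum_congr rfl fun n _ => Real.mul_rpow hC (norm_nonneg _)
      _ ≤ C ^ p.toReal * ‖g‖ ^ p.toReal :=
          mul_le_mul_of_nonneg_left (lp.sum_rpow_le_norm_rpow hp g s) (Real.rpow_nonneg hC _)
      _ = (C * ‖g‖) ^ p.toReal := (Real.mul_rpow hC (norm_nonneg _)).symm

/-- Shifts preserve membership. -/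
lemma memℓp_shift (x : lp (fun _ : ZLat d => ℂ) p) (m : ZLat d) :
    Memℓp (fun n => x (n + m)) p := by
  rcases p_cases (p := p) with hp | hp
  · subst hp
    apply memℓp_infty
    obtain ⟨M, hM⟩ := memℓp_infty_iff.1 (lp.memℓp x)
    refine ⟨M, ?_⟩
    rintro y ⟨n, rfl⟩
    exact hM ⟨n + m, rfl⟩
  · apply memℓp_gen
    have h := (lp.memℓp x).summable hp
    have := (Equiv.addRight m).summable_iff
      (f := fun n : ZLat d => ‖x n‖ ^ p.toReal)
    exact this.2 h

/-- Shifts do not increase the norm. -/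
lemma norm_shift_le (x : lp (fun _ : ZLat d => ℂ) p) (m : ZLat d) :
    ‖(⟨fun n => x (n + m), memℓp_shift x m⟩ : lp (fun _ : ZLat d => ℂ) p)‖ ≤ ‖x‖ := by
  rcases p_cases (p := p) with hp | hp
  · subst hp
    exact lp.norm_le_of_forall_le (norm_nonneg x) fun n =>
      lp.norm_apply_le_norm p_ne_zero x (n + m)
  · refine lp.norm_le_of_forall_sum_le hp (norm_nonneg x) fun s => ?_
    have : ∑ n ∈ s, ‖x (n + m)‖ ^ p.toReal
        = ∑ n ∈ s.image (· + m), ‖x n‖ ^ p.toReal := by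
      rw [Finset.sum_image (fun a _ b _ hab => by simpa using hab)]
    rw [this]
    exact lp.sum_rpow_le_norm_rpow hp x _

end LpAux

section Ops

variable {d : ℕ} {p : ℝ≥0∞} [Fact (1 ≤ p)]

/-- Shift operator on `l^p`. -/
def shiftE (m : ZLat d) (x : lp (fun _ : ZLat d => ℂ) p) : lp (fun _ : ZLat d => ℂ) p :=
  ⟨fun n => x (n + m), memℓp_shift x m⟩

@[simp] lemma shiftE_apply (m : ZLat d) (x : lp (fun _ : ZLat d => ℂ) p) (n : ZLat d) :
    (shiftE m x : ZLat d → ℂ) n = x (n + m) := rfl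

lemma shiftE_norm_le (m : ZLat d) (x : lp (fun _ : ZLat d => ℂ) p) :
    ‖shiftE m x‖ ≤ ‖x‖ := norm_shift_le x m

/-- The discrete Laplacian as an operator on `l^p`. -/
def lapE (h : ℝ) (x : lp (fun _ : ZLat d => ℂ) p) : lp (fun _ : ZLat d => ℂ) p :=
  (((h : ℂ) ^ 2)⁻¹) • ∑ j : Fin d, (shiftE (latE j) x + shiftE (-latE j) x - (2 : ℂ) • x)

lemma lapE_apply (h : ℝ) (x : lp (fun _ : ZLat d => ℂ) p) (n : ZLat d) :
    (lapE h x : ZLat d → ℂ) n = discLapC d h (⇑x) n := by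
  simp only [lapE, discLapC, lp.coeFn_smul, Pi.smul_apply, lp.coeFn_sum, Finset.sum_apply,
    lp.coeFn_sub, lp.coeFn_add, Pi.sub_apply, Pi.add_apply, shiftE_apply, smul_eq_mul]
  rw [div_eq_mul_inv, mul_comm]
  rfl

lemma lapE_sub (h : ℝ) (x y : lp (fun _ : ZLat d => ℂ) p) :
    lapE h (x - y) = lapE h x - lapE h y := by
  apply lp.ext
  funext n
  simp only [lp.coeFn_sub, Pi.sub_apply, lapE_apply, discLapC]
  rw [← sub_div]
  congr 1
  rw [← Finset.sum_sub_distrib]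
  refine Finset.sum_congr rfl fun j _ => ?_
  ring

lemma lapE_norm_le {h : ℝ} (hh : 0 < h) (x : lp (fun _ : ZLat d => ℂ) p) :
    ‖lapE h x‖ ≤ (4 * d / h ^ 2) * ‖x‖ := by
  have h2 : ‖(((h : ℂ) ^ 2)⁻¹)‖ = (h ^ 2)⁻¹ := by
    rw [norm_inv, norm_pow, Complex.norm_real, Real.norm_eq_abs, abs_of_pos hh]
  calc ‖lapE h x‖ = (h ^ 2)⁻¹ * ‖∑ j : Fin d, (shiftE (latE j) x + shiftE (-latE j) x
        - (2 : ℂ) • x)‖ := by rw [lapE, norm_smul, h2]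
    _ ≤ (h ^ 2)⁻¹ * (d * (4 * ‖x‖)) := by
        gcongr
        refine (norm_sum_le _ _).trans ?_
        have : ∀ j : Fin d, ‖shiftE (latE j) x + shiftE (-latE j) x - (2 : ℂ) • x‖ ≤ 4 * ‖x‖ := by
          intro j
          have h1 := shiftE_norm_le (p := p) (latE j) x
          have h2 := shiftE_norm_le (p := p) (-latE j) x
          have h3 : ‖(2 : ℂ) • x‖ = 2 * ‖x‖ := by
            rw [norm_smul]; norm_num
          calc ‖shiftE (latE j) x + shiftE (-latE j) x - (2 : ℂ) • x‖
              ≤ ‖shiftE (latE j) x + shiftE (-latE j) x‖ + ‖(2 : ℂ) • x‖ := norm_sub_le _ _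
            _ ≤ ‖shiftE (latE j) x‖ + ‖shiftE (-latE j) x‖ + ‖(2 : ℂ) • x‖ := by
                gcongr; exact norm_add_le _ _
            _ ≤ 4 * ‖x‖ := by rw [h3]; linarith
        calc ∑ j : Fin d, ‖shiftE (latE j) x + shiftE (-latE j) x - (2 : ℂ) • x‖
            ≤ ∑ _j : Fin d, 4 * ‖x‖ := Finset.sum_le_sum fun j _ => this j
          _ = d * (4 * ‖x‖) := by simp [mul_comm]
    _ = (4 * d / h ^ 2) * ‖x‖ := by field_simp

/-- Multiplication by the potential. -/
def potE (V : ZLat d → ℝ) (CV : ℝ) (hV : ∀ n, |V n| ≤ CV)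
    (x : lp (fun _ : ZLat d => ℂ) p) : lp (fun _ : ZLat d => ℂ) p :=
  ⟨fun n => (V n : ℂ) * x n,
    memℓp_of_dominated x ((abs_nonneg _).trans (hV 0)) fun n => by
      rw [norm_mul, Complex.norm_real, Real.norm_eq_abs]
      exact mul_le_mul_of_nonneg_right (hV n) (norm_nonneg _)⟩

@[simp] lemma potE_apply (V : ZLat d → ℝ) (CV : ℝ) (hV : ∀ n, |V n| ≤ CV)
    (x : lp (fun _ : ZLat d => ℂ) p) (n : ZLat d) :
    (potE V CV hV x : ZLat d → ℂ) n = (V n : ℂ) * x n := rfl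

lemma potE_sub (V : ZLat d → ℝ) (CV : ℝ) (hV : ∀ n, |V n| ≤ CV)
    (x y : lp (fun _ : ZLat d => ℂ) p) :
    potE V CV hV (x - y) = potE V CV hV x - potE V CV hV y := by
  apply lp.ext
  funext n
  simp only [lp.coeFn_sub, Pi.sub_apply, potE_apply]
  ring

lemma potE_norm_le (V : ZLat d → ℝ) (CV : ℝ) (hV : ∀ n, |V n| ≤ CV)
    (x : lp (fun _ : ZLat d => ℂ) p) : ‖potE V CV hV x‖ ≤ CV * ‖x‖ := by
  refine lp_norm_le_of_dominated ((abs_nonneg _).trans (hV 0)) fun n => ?_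
  rw [potE_apply, norm_mul, Complex.norm_real, Real.norm_eq_abs]
  exact mul_le_mul_of_nonneg_right (hV n) (norm_nonneg _)

/-- The nonlinearity `u ↦ |u|^{2σ} u` on `l^p`. -/
def nlE (σ : ℝ) (hσ : 0 < σ) (x : lp (fun _ : ZLat d => ℂ) p) : lp (fun _ : ZLat d => ℂ) p :=
  ⟨fun n => ((‖x n‖ ^ (2 * σ) : ℝ) : ℂ) * x n,
    memℓp_of_dominated x (Real.rpow_nonneg (norm_nonneg x) (2 * σ)) fun n => by
      rw [norm_mul, Complex.norm_real, Real.norm_eq_abs,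
        abs_of_nonneg (Real.rpow_nonneg (norm_nonneg _) _)]
      refine mul_le_mul_of_nonneg_right ?_ (norm_nonneg _)
      exact Real.rpow_le_rpow (norm_nonneg _)
        (by simpa using lp.norm_apply_le_norm p_ne_zero x n)
        (by positivity)⟩

@[simp] lemma nlE_apply (σ : ℝ) (hσ : 0 < σ) (x : lp (fun _ : ZLat d => ℂ) p) (n : ZLat d) :
    (nlE σ hσ x : ZLat d → ℂ) n = ((‖x n‖ ^ (2 * σ) : ℝ) : ℂ) * x n := rfl

lemma nlE_lip (σ : ℝ) (hσ : 0 < σ) {R : ℝ} (hR : 0 ≤ R)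
    {x y : lp (fun _ : ZLat d => ℂ) p} (hx : ‖x‖ ≤ R) (hy : ‖y‖ ≤ R) :
    ‖nlE σ hσ x - nlE σ hσ y‖ ≤ (2 * σ + 1) * R ^ (2 * σ) * ‖x - y‖ := by
  refine lp_norm_le_of_dominated ?_ fun n => ?_
  · positivity
  · simp only [lp.coeFn_sub, Pi.sub_apply, nlE_apply]
    have hxn : ‖x n‖ ≤ R := by
      simpa using (lp.norm_apply_le_norm p_ne_zero x n).trans hx
    have hyn : ‖y n‖ ≤ R := by
      simpa using (lp.norm_apply_le_norm p_ne_zero y n).trans hy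
    simpa using nlc_lip (by positivity) hxn hyn

end Ops

section Field

variable {d : ℕ} {p : ℝ≥0∞} [Fact (1 ≤ p)]

/-- The right-hand side vector field of the discrete NLS: `u' = -i (Δ_h u - V u - λ |u|^{2σ} u)`. -/
def GE (h σ : ℝ) (hσ : 0 < σ) (lam : ℝ) (V : ZLat d → ℝ) (CV : ℝ) (hV : ∀ n, |V n| ≤ CV)
    (x : lp (fun _ : ZLat d => ℂ) p) : lp (fun _ : ZLat d => ℂ) p :=
  (-Complex.I) • (lapE h x - potE V CV hV x - (lam : ℂ) • nlE σ hσ x)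

lemma GE_apply (h σ : ℝ) (hσ : 0 < σ) (lam : ℝ) (V : ZLat d → ℝ) (CV : ℝ)
    (hV : ∀ n, |V n| ≤ CV) (x : lp (fun _ : ZLat d => ℂ) p) (n : ZLat d) :
    (GE h σ hσ lam V CV hV x : ZLat d → ℂ) n
      = -Complex.I * (discLapC d h (⇑x) n - (V n : ℂ) * x n
          - (lam : ℂ) * ((‖x n‖ ^ (2 * σ) : ℝ) : ℂ) * x n) := by
  simp only [GE, lp.coeFn_smul, Pi.smul_apply, lp.coeFn_sub, Pi.sub_apply, lapE_apply,
    potE_apply, nlE_apply, smul_eq_mul]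
  ring

lemma GE_zero (h σ : ℝ) (hσ : 0 < σ) (lam : ℝ) (V : ZLat d → ℝ) (CV : ℝ)
    (hV : ∀ n, |V n| ≤ CV) : GE h σ hσ lam V CV hV (0 : lp (fun _ : ZLat d => ℂ) p) = 0 := by
  apply lp.ext
  funext n
  rw [GE_apply]
  simp [discLapC, lp.coeFn_zero]

lemma GE_lip_on {h σ : ℝ} (hh : 0 < h) (hσ : 0 < σ) {lam : ℝ} (hlam : |lam| ≤ 1)
    {V : ZLat d → ℝ} {CV : ℝ} (hV : ∀ n, |V n| ≤ CV) {R : ℝ} (hR : 0 ≤ R)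
    {x y : lp (fun _ : ZLat d => ℂ) p} (hx : ‖x‖ ≤ R) (hy : ‖y‖ ≤ R) :
    ‖GE h σ hσ lam V CV hV x - GE h σ hσ lam V CV hV y‖
      ≤ (4 * d / h ^ 2 + CV + (2 * σ + 1) * R ^ (2 * σ)) * ‖x - y‖ := by
  set L := lapE (p := p) h
  set P := potE (p := p) V CV hV
  set N := nlE (p := p) σ hσ
  have key : GE h σ hσ lam V CV hV x - GE h σ hσ lam V CV hV y
      = (-Complex.I) • (L (x - y) - P (x - y) - (lam : ℂ) • (N x - N y)) := by
    rw [GE, GE, ← smul_sub]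
    congr 1
    show _ = lapE h (x - y) - potE V CV hV (x - y) - (lam : ℂ) • (nlE σ hσ x - nlE σ hσ y)
    rw [lapE_sub, potE_sub, smul_sub]
    abel
  rw [key, norm_smul]
  have hI : ‖(-Complex.I : ℂ)‖ = 1 := by simp
  rw [hI, one_mul]
  have h1 : ‖L (x - y)‖ ≤ (4 * d / h ^ 2) * ‖x - y‖ := lapE_norm_le hh _
  have h2 : ‖P (x - y)‖ ≤ CV * ‖x - y‖ := potE_norm_le V CV hV _
  have h3 : ‖(lam : ℂ) • (N x - N y)‖ ≤ (2 * σ + 1) * R ^ (2 * σ) * ‖x - y‖ := by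
    rw [norm_smul, Complex.norm_real, Real.norm_eq_abs]
    calc |lam| * ‖N x - N y‖ ≤ 1 * ‖N x - N y‖ :=
          mul_le_mul_of_nonneg_right hlam (norm_nonneg _)
      _ = ‖N x - N y‖ := one_mul _
      _ ≤ (2 * σ + 1) * R ^ (2 * σ) * ‖x - y‖ := nlE_lip σ hσ hR hx hy
  calc ‖L (x - y) - P (x - y) - (lam : ℂ) • (N x - N y)‖
      ≤ ‖L (x - y) - P (x - y)‖ + ‖(lam : ℂ) • (N x - N y)‖ := norm_sub_le _ _
    _ ≤ ‖L (x - y)‖ + ‖P (x - y)‖ + ‖(lam : ℂ) • (N x - N y)‖ := by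
        gcongr; exact norm_sub_le _ _
    _ ≤ (4 * d / h ^ 2) * ‖x - y‖ + CV * ‖x - y‖ + (2 * σ + 1) * R ^ (2 * σ) * ‖x - y‖ := by
        gcongr
    _ = (4 * d / h ^ 2 + CV + (2 * σ + 1) * R ^ (2 * σ)) * ‖x - y‖ := by ring

end Field

section Field2

variable {d : ℕ} {p : ℝ≥0∞} [Fact (1 ≤ p)]
variable {h σ : ℝ} {lam : ℝ} {V : ZLat d → ℝ} {CV : ℝ}

lemma GE_norm_le (hh : 0 < h) (hσ : 0 < σ) (hlam : |lam| ≤ 1) (hV : ∀ n, |V n| ≤ CV)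
    {R : ℝ} (hR : 0 ≤ R) {x : lp (fun _ : ZLat d => ℂ) p} (hx : ‖x‖ ≤ R) :
    ‖GE h σ hσ lam V CV hV x‖ ≤ (4 * d / h ^ 2 + CV + (2 * σ + 1) * R ^ (2 * σ)) * R := by
  have h0 : ‖(0 : lp (fun _ : ZLat d => ℂ) p)‖ ≤ R := by simpa using hR
  have := GE_lip_on (p := p) hh hσ hlam hV hR hx h0
  rw [GE_zero, sub_zero, sub_zero] at this
  refine this.trans ?_
  have hC : 0 ≤ 4 * d / h ^ 2 + CV + (2 * σ + 1) * R ^ (2 * σ) := by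
    have hCV : 0 ≤ CV := (abs_nonneg _).trans (hV 0)
    have : (0:ℝ) ≤ R ^ (2 * σ) := Real.rpow_nonneg hR _
    positivity
  exact mul_le_mul_of_nonneg_left hx hC

lemma GE_lipschitzOnWith (hh : 0 < h) (hσ : 0 < σ) (hlam : |lam| ≤ 1)
    (hV : ∀ n, |V n| ≤ CV) {R : ℝ} (hR : 0 ≤ R) :
    LipschitzOnWith (Real.toNNReal (4 * d / h ^ 2 + CV + (2 * σ + 1) * R ^ (2 * σ)))
      (GE (p := p) h σ hσ lam V CV hV) (Metric.closedBall 0 R) := by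
  rw [lipschitzOnWith_iff_dist_le_mul]
  intro x hx y hy
  rw [Metric.mem_closedBall, dist_zero_right] at hx hy
  rw [dist_eq_norm, dist_eq_norm]
  have hC : 0 ≤ 4 * d / h ^ 2 + CV + (2 * σ + 1) * R ^ (2 * σ) := by
    have hCV : 0 ≤ CV := (abs_nonneg _).trans (hV 0)
    have : (0:ℝ) ≤ R ^ (2 * σ) := Real.rpow_nonneg hR _
    positivity
  rw [Real.coe_toNNReal _ hC]
  exact GE_lip_on hh hσ hlam hV hR hx hy

lemma GE_continuous (hh : 0 < h) (hσ : 0 < σ) (hlam : |lam| ≤ 1) (hV : ∀ n, |V n| ≤ CV) :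
    Continuous (GE (p := p) h σ hσ lam V CV hV) := by
  rw [continuous_iff_continuousAt]
  intro x
  have hball : Metric.closedBall (0 : lp (fun _ : ZLat d => ℂ) p) (‖x‖ + 1) ∈ nhds x := by
    refine Filter.mem_of_superset ((Metric.isOpen_ball).mem_nhds ?_) Metric.ball_subset_closedBall
    rw [Metric.mem_ball, dist_zero_right]
    linarith
  have hcont := (GE_lipschitzOnWith (p := p) hh hσ hlam hV
    (by positivity : (0:ℝ) ≤ ‖x‖ + 1)).continuousOn
  exact ContinuousWithinAt.continuousAt
    (hcont x (by rw [Metric.mem_closedBall, dist_zero_right]; linarith)) hball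

end Field2

section Bootstrap

variable {E : Type*} [NormedAddCommGroup E] [NormedSpace ℝ E]

open Set

lemma bootstrap_right {g g' : ℝ → E} {T R M : ℝ}
    (hT : 0 < T) (hR : 0 < R) (hM : 0 ≤ M)
    (hderiv : ∀ t ∈ Icc (0:ℝ) T, HasDerivWithinAt g (g' t) (Icc 0 T) t)
    (hbnd : ∀ t ∈ Icc (0:ℝ) T, ‖g t‖ ≤ 2 * R → ‖g' t‖ ≤ M)
    (hMT : M * T ≤ R / 2) (h0 : ‖g 0‖ ≤ R) :
    ∀ t ∈ Icc (0:ℝ) T, ‖g t‖ ≤ 2 * R := by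
  by_contra hcon
  push_neg at hcon
  obtain ⟨t₀, ht₀, hgt⟩ := hcon
  have hgc : ContinuousOn g (Icc 0 T) := fun s hs => (hderiv s hs).continuousWithinAt
  set B := {t | t ∈ Icc (0:ℝ) T ∧ 2 * R ≤ ‖g t‖} with hB
  have hBclosed : IsClosed B := by
    have : B = Icc (0:ℝ) T ∩ (fun t => ‖g t‖) ⁻¹' (Ici (2 * R)) := rfl
    rw [this]
    exact (hgc.norm).preimage_isClosed_of_isClosed isClosed_Icc isClosed_Ici
  have hBne : B.Nonempty := ⟨t₀, ht₀, hgt.le⟩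
  have hBbdd : BddBelow B := ⟨0, fun b hb => hb.1.1⟩
  set τ := sInf B with hτ
  have hτB : τ ∈ B := hBclosed.csInf_mem hBne hBbdd
  have hτ0 : 0 ≤ τ := hτB.1.1
  have hτT : τ ≤ T := hτB.1.2
  have hτpos : 0 < τ := by
    rcases eq_or_lt_of_le hτ0 with hh | hh
    · exfalso
      have := hτB.2
      rw [← hh] at this
      linarith
    · exact hh
  have hlt : ∀ s ∈ Ico (0:ℝ) τ, ‖g s‖ < 2 * R := by
    intro s hs
    by_contra hge
    push_neg at hge
    exact absurd (csInf_le hBbdd ⟨⟨hs.1, hs.2.le.trans hτT⟩, hge⟩) (not_le.2 hs.2)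
  have hle : ∀ s ∈ Icc (0:ℝ) τ, ‖g s‖ ≤ 2 * R := by
    intro s hs
    rcases eq_or_lt_of_le hs.2 with hsτ | hsτ
    · -- s = τ: use continuity from the left
      rw [hsτ]
      have hne : (nhdsWithin τ (Ico (0:ℝ) τ)).NeBot := by
        rw [← mem_closure_iff_nhdsWithin_neBot, closure_Ico (by linarith : (0:ℝ) ≠ τ)]
        exact ⟨hτ0, le_refl τ⟩
      haveI := hne
      have hc : ContinuousWithinAt g (Icc 0 T) τ := hgc τ ⟨hτ0, hτT⟩
      have htend : Filter.Tendsto (fun u => ‖g u‖) (nhdsWithin τ (Ico 0 τ)) (nhds ‖g τ‖) :=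
        (hc.mono_left (nhdsWithin_mono τ (fun u hu => ⟨hu.1, hu.2.le.trans hτT⟩))).norm
      exact le_of_tendsto htend
        (Filter.eventually_of_mem self_mem_nhdsWithin fun u hu => (hlt u hu).le)
    · exact (hlt s ⟨hs.1, hsτ⟩).le
  have hd : ∀ s ∈ Icc (0:ℝ) τ, HasDerivWithinAt g (g' s) (Icc 0 τ) s := fun s hs =>
    (hderiv s ⟨hs.1, hs.2.trans hτT⟩).mono (Icc_subset_Icc_right hτT)
  have hbd : ∀ s ∈ Icc (0:ℝ) τ, ‖g' s‖ ≤ M := fun s hs =>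
    hbnd s ⟨hs.1, hs.2.trans hτT⟩ (hle s hs)
  have hmvt := (convex_Icc (0:ℝ) τ).norm_image_sub_le_of_norm_hasDerivWithin_le
    hd hbd (left_mem_Icc.2 hτ0) (right_mem_Icc.2 hτ0)
  have : ‖g τ - g 0‖ ≤ M * τ := by simpa [abs_of_nonneg hτ0] using hmvt
  have hMτ : M * τ ≤ R / 2 := (mul_le_mul_of_nonneg_left hτT hM).trans hMT
  have h2R : 2 * R ≤ ‖g τ‖ := hτB.2
  have : ‖g τ‖ ≤ ‖g 0‖ + M * τ := by
    have := norm_sub_norm_le (g τ) (g 0)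
    linarith [this.trans ‹‖g τ - g 0‖ ≤ M * τ›]
  linarith

end Bootstrap

section Bootstrap2

open Set

variable {E : Type*} [NormedAddCommGroup E] [NormedSpace ℝ E]

lemma bootstrap_two_sided {g g' : ℝ → E} {T R M : ℝ}
    (hT : 0 < T) (hR : 0 < R) (hM : 0 ≤ M)
    (hderiv : ∀ t ∈ Icc (-T) T, HasDerivWithinAt g (g' t) (Icc (-T) T) t)
    (hbnd : ∀ t ∈ Icc (-T) T, ‖g t‖ ≤ 2 * R → ‖g' t‖ ≤ M)
    (hMT : M * T ≤ R / 2) (h0 : ‖g 0‖ ≤ R) :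
    ∀ t ∈ Icc (-T) T, ‖g t‖ ≤ 2 * R := by
  have hsub : Icc (0:ℝ) T ⊆ Icc (-T) T := Icc_subset_Icc (by linarith) le_rfl
  have hmem : ∀ t ∈ Icc (0:ℝ) T, t ∈ Icc (-T) T := fun t ht => hsub ht
  -- right half
  have hright : ∀ t ∈ Icc (0:ℝ) T, ‖g t‖ ≤ 2 * R := by
    refine bootstrap_right hT hR hM (fun t ht => (hderiv t (hmem t ht)).mono hsub)
      (fun t ht hgt => hbnd t (hmem t ht) hgt) hMT h0
  -- left half, by time reversal
  have hmapsTo : Set.MapsTo (fun s : ℝ => -s) (Icc (0:ℝ) T) (Icc (-T) T) := by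
    intro s hs
    constructor <;> simp only [neg_le_neg_iff] <;> [linarith [hs.2]; skip]
    simp only [mem_Icc] at hs ⊢
    linarith [hs.1]
  have hleft : ∀ t ∈ Icc (0:ℝ) T, ‖g (-t)‖ ≤ 2 * R := by
    refine bootstrap_right (g := fun s => g (-s)) (g' := fun s => -g' (-s)) hT hR hM
      (fun t ht => ?_) (fun t ht hgt => by simpa using hbnd (-t) (hmapsTo ht) hgt)
      hMT (by simpa using h0)
    have hinner : HasDerivWithinAt g (g' (-t)) (Icc (-T) T) (-t) := hderiv (-t) (hmapsTo ht)
    have := hinner.scomp t ((hasDerivAt_neg t).hasDerivWithinAt (s := Icc (0:ℝ) T)) hmapsTo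
    simpa [Function.comp_def] using this
  intro t ht
  rcases le_total 0 t with h0t | ht0
  · exact hright t ⟨h0t, ht.2⟩
  · have := hleft (-t) ⟨by linarith, by linarith [ht.1]⟩
    simpa using this

end Bootstrap2

section Equivalence

variable {d : ℕ} {p : ℝ≥0∞} [Fact (1 ≤ p)]

lemma isDNLS_iff {h σ lam : ℝ} (hσ : 0 < σ) {V : ZLat d → ℝ} {CV : ℝ}
    (hV : ∀ n, |V n| ≤ CV) (S : Set ℝ) (u u' : ℝ → lp (fun _ : ZLat d => ℂ) p) :
    IsDNLSSolutionOn d h σ lam V p S u u' ↔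
      ((∀ t ∈ S, HasDerivWithinAt u (u' t) S t) ∧ ContinuousOn u' S ∧
        ∀ t ∈ S, u' t = GE h σ hσ lam V CV hV (u t)) := by
  unfold IsDNLSSolutionOn
  refine and_congr_right fun _ => and_congr_right fun _ => ?_
  constructor
  · intro hyp t ht
    apply lp.ext
    funext n
    have eqn := hyp t ht n
    rw [GE_apply]
    linear_combination (-Complex.I) * eqn + ((u' t : ZLat d → ℂ) n) * Complex.I_mul_I
  · intro hyp t ht n
    have := hyp t ht
    have hn : (u' t : ZLat d → ℂ) n = (GE h σ hσ lam V CV hV (u t) : ZLat d → ℂ) n := by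
      rw [this]
    rw [GE_apply] at hn
    rw [hn]
    linear_combination (-(discLapC d h (⇑(u t)) n - (V n : ℂ) * (u t : ZLat d → ℂ) n
      - (lam : ℂ) * ((‖(u t : ZLat d → ℂ) n‖ ^ (2 * σ) : ℝ) : ℂ)
        * (u t : ZLat d → ℂ) n)) * Complex.I_mul_I

end Equivalence

section Main

open Set Metric

variable {d : ℕ} {p : ℝ≥0∞} [Fact (1 ≤ p)]

lemma master (d : ℕ) (h : ℝ) (hh : 0 < h) (σ : ℝ) (hσ : 0 < σ)
    (lam : ℝ) (hlam : lam = 1 ∨ lam = -1) (p : ℝ≥0∞) [Fact (1 ≤ p)]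
    (V : ZLat d → ℝ) (CV : ℝ) (hV : ∀ n, |V n| ≤ CV) (R : ℝ) (hR : 0 < R) :
    ∃ T : ℝ, 0 < T ∧ ∃ L : ℝ, 0 < L ∧
      (∀ u₀ : lp (fun _ : ZLat d => ℂ) p, ‖u₀‖ ≤ R →
        ∃ u u' : ℝ → lp (fun _ : ZLat d => ℂ) p,
          IsDNLSSolutionOn d h σ lam V p (Set.Icc (-T) T) u u' ∧ u 0 = u₀) ∧
      (∀ u₀ : lp (fun _ : ZLat d => ℂ) p, ‖u₀‖ ≤ R →
        ∀ u u' v v' : ℝ → lp (fun _ : ZLat d => ℂ) p,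
          IsDNLSSolutionOn d h σ lam V p (Set.Icc (-T) T) u u' →
          IsDNLSSolutionOn d h σ lam V p (Set.Icc (-T) T) v v' →
          u 0 = u₀ → v 0 = u₀ → Set.EqOn u v (Set.Icc (-T) T)) ∧
      (∀ u₀ v₀ : lp (fun _ : ZLat d => ℂ) p, ‖u₀‖ ≤ R → ‖v₀‖ ≤ R →
        ∀ u u' v v' : ℝ → lp (fun _ : ZLat d => ℂ) p,
          IsDNLSSolutionOn d h σ lam V p (Set.Icc (-T) T) u u' →
          IsDNLSSolutionOn d h σ lam V p (Set.Icc (-T) T) v v' →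
          u 0 = u₀ → v 0 = v₀ →
          ∀ t ∈ Set.Icc (-T) T, ‖u t - v t‖ ≤ L * ‖u₀ - v₀‖) := by
  have hCV : 0 ≤ CV := (abs_nonneg _).trans (hV 0)
  have hlam' : |lam| ≤ 1 := by rcases hlam with rfl | rfl <;> norm_num
  set K2 : ℝ := 4 * d / h ^ 2 + CV + (2 * σ + 1) * (2 * R) ^ (2 * σ) with hK2def
  have h2R : (0:ℝ) ≤ 2 * R := by linarith
  have hK2 : 0 ≤ K2 := by
    rw [hK2def]
    have h1 : (0:ℝ) ≤ (2 * R) ^ (2 * σ) := Real.rpow_nonneg h2R _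
    have h2 : (0:ℝ) ≤ 4 * d / h ^ 2 := by positivity
    have h3 : (0:ℝ) ≤ (2 * σ + 1) * (2 * R) ^ (2 * σ) := mul_nonneg (by linarith) h1
    linarith
  set M : ℝ := K2 * (2 * R) with hMdef
  have hM : 0 ≤ M := by positivity
  set T : ℝ := R / (2 * (M + 1)) with hTdef
  have hT : 0 < T := by positivity
  have hMT : M * T ≤ R / 2 := by
    rw [hTdef, mul_div_assoc']
    rw [div_le_div_iff₀ (by positivity) (by norm_num)]
    nlinarith
  set K : NNReal := Real.toNNReal K2 with hKdef
  have hKcoe : (K : ℝ) = K2 := Real.coe_toNNReal _ hK2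
  set GG : lp (fun _ : ZLat d => ℂ) p → lp (fun _ : ZLat d => ℂ) p :=
    GE h σ hσ lam V CV hV with hGGdef
  have lipOn : LipschitzOnWith K GG (closedBall 0 (2 * R)) :=
    GE_lipschitzOnWith hh hσ hlam' hV h2R
  have hGEb : ∀ x : lp (fun _ : ZLat d => ℂ) p, ‖x‖ ≤ 2 * R → ‖GG x‖ ≤ M := fun x hx => by
    rw [hGGdef, hMdef, hK2def]
    exact GE_norm_le hh hσ hlam' hV h2R hx
  have hGGcont : Continuous GG := GE_continuous hh hσ hlam' hV
  set L : ℝ := Real.exp (K2 * T) with hLdef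
  have hL : 0 < L := Real.exp_pos _
  -- membership and bootstrap
  have hball : ∀ u₀ : lp (fun _ : ZLat d => ℂ) p, ‖u₀‖ ≤ R →
      closedBall u₀ R ⊆ closedBall 0 (2 * R) := by
    intro u₀ hu₀ z hz
    rw [mem_closedBall, dist_eq_norm] at hz
    rw [mem_closedBall_zero_iff]
    calc ‖z‖ = ‖(z - u₀) + u₀‖ := by rw [sub_add_cancel]
      _ ≤ ‖z - u₀‖ + ‖u₀‖ := norm_add_le _ _
      _ ≤ 2 * R := by linarith
  have hboot : ∀ u₀ : lp (fun _ : ZLat d => ℂ) p, ‖u₀‖ ≤ R →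
      ∀ u u' : ℝ → lp (fun _ : ZLat d => ℂ) p,
      IsDNLSSolutionOn d h σ lam V p (Set.Icc (-T) T) u u' → u 0 = u₀ →
      ∀ t ∈ Icc (-T) T, ‖u t‖ ≤ 2 * R := by
    intro u₀ hu₀ u u' hu hu0
    rw [isDNLS_iff hσ hV] at hu
    obtain ⟨hud, huc, hueq⟩ := hu
    refine bootstrap_two_sided hT hR hM hud (fun t ht hgt => ?_) hMT (by rw [hu0]; exact hu₀)
    rw [hueq t ht]
    exact hGEb _ hgt
  refine ⟨T, hT, L, hL, ?_, ?_, ?_⟩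
  · -- existence via Picard–Lindelöf
    intro u₀ hu₀
    have hpl : IsPicardLindelof (fun _ : ℝ => GG) (tmin := -T) (tmax := T)
        ⟨0, by linarith, hT.le⟩ u₀ (Real.toNNReal R) 0 (Real.toNNReal M) K :=
      { lipschitzOnWith := fun t _ => lipOn.mono (by
          rw [Real.coe_toNNReal _ hR.le]; exact hball u₀ hu₀)
        continuousOn := fun x _ => continuousOn_const
        norm_le := fun t _ x hx => by
          rw [Real.coe_toNNReal _ hR.le] at hx
          rw [Real.coe_toNNReal _ hM]
          exact hGEb x (mem_closedBall_zero_iff.1 (hball u₀ hu₀ hx))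
        mul_max_le := by
          have : max (T - 0) (0 - -T) = T := by
            rw [sub_zero, zero_sub, neg_neg, max_self]
          rw [Real.coe_toNNReal _ hM, tsub_zero, Real.coe_toNNReal _ hR.le]
          show M * max T (0 - -T) ≤ R - ((0 : NNReal) : ℝ)
          rw [NNReal.coe_zero, sub_zero, zero_sub, neg_neg, max_self]
          linarith }
    obtain ⟨f, hf0, hfderiv⟩ := hpl.exists_eq_forall_mem_Icc_hasDerivWithinAt₀
    refine ⟨f, fun t => GG (f t), ?_, hf0⟩
    rw [isDNLS_iff hσ hV]
    exact ⟨hfderiv, hGGcont.comp_continuousOn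
      (fun t ht => (hfderiv t ht).continuousWithinAt), fun t _ => rfl⟩
  · -- uniqueness
    intro u₀ hu₀ u u' v v' hu hv hu0 hv0
    have hu2R := hboot u₀ hu₀ u u' hu hu0
    have hv2R := hboot u₀ hu₀ v v' hv hv0
    rw [isDNLS_iff hσ hV] at hu hv
    obtain ⟨hud, huc, hueq⟩ := hu
    obtain ⟨hvd, hvc, hveq⟩ := hv
    refine ODE_solution_unique_of_mem_Icc (v := fun _ x => GG x)
      (s := fun _ => closedBall 0 (2 * R)) (fun _ _ => lipOn)
      (t₀ := 0) ⟨by linarith, hT⟩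
      (fun t ht => (hud t ht).continuousWithinAt) ?_
      (fun t ht => mem_closedBall_zero_iff.2 (hu2R t (Ioo_subset_Icc_self ht)))
      (fun t ht => (hvd t ht).continuousWithinAt) ?_
      (fun t ht => mem_closedBall_zero_iff.2 (hv2R t (Ioo_subset_Icc_self ht)))
      (by rw [hu0, hv0])
    · intro t ht
      have h1 := (hud t (Ioo_subset_Icc_self ht)).hasDerivAt (Icc_mem_nhds ht.1 ht.2)
      rwa [hueq t (Ioo_subset_Icc_self ht)] at h1
    · intro t ht
      have h1 := (hvd t (Ioo_subset_Icc_self ht)).hasDerivAt (Icc_mem_nhds ht.1 ht.2)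
      rwa [hveq t (Ioo_subset_Icc_self ht)] at h1
  · -- Lipschitz dependence
    intro u₀ v₀ hu₀ hv₀ u u' v v' hu hv hu0 hv0
    have hu2R := hboot u₀ hu₀ u u' hu hu0
    have hv2R := hboot v₀ hv₀ v v' hv hv0
    rw [isDNLS_iff hσ hV] at hu hv
    obtain ⟨hud, huc, hueq⟩ := hu
    obtain ⟨hvd, hvc, hveq⟩ := hv
    set δ : ℝ := dist (u 0) (v 0) with hδdef
    have hsub0T : Icc (0:ℝ) T ⊆ Icc (-T) T := Icc_subset_Icc (by linarith) le_rfl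
    have hucont : ContinuousOn u (Icc (-T) T) := fun t ht => (hud t ht).continuousWithinAt
    have hvcont : ContinuousOn v (Icc (-T) T) := fun t ht => (hvd t ht).continuousWithinAt
    -- forward in time
    have hfwd : ∀ t ∈ Icc (0:ℝ) T, dist (u t) (v t) ≤ δ * Real.exp (K * (t - 0)) := by
      have hd' : ∀ (w : ℝ → lp (fun _ : ZLat d => ℂ) p)
          (w' : ℝ → lp (fun _ : ZLat d => ℂ) p),
          (∀ t ∈ Icc (-T) T, HasDerivWithinAt w (w' t) (Icc (-T) T) t) →
          (∀ t ∈ Icc (-T) T, w' t = GG (w t)) →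
          ∀ t ∈ Ico (0:ℝ) T, HasDerivWithinAt w (GG (w t)) (Ici t) t := by
        intro w w' hwd hweq t ht
        have htIcc : t ∈ Icc (-T) T := ⟨by linarith [ht.1], ht.2.le⟩
        have h1 := hwd t htIcc
        rw [hweq t htIcc] at h1
        refine h1.mono_of_mem_nhdsWithin (Filter.mem_of_superset
          (Icc_mem_nhdsGE_of_mem ⟨le_refl t, ht.2⟩)
          (Icc_subset_Icc (by linarith [ht.1]) le_rfl))
      exact dist_le_of_trajectories_ODE_of_mem (v := fun _ x => GG x)
        (s := fun _ => closedBall 0 (2 * R)) (fun _ _ => lipOn)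
        (hucont.mono hsub0T) (hd' u u' hud hueq)
        (fun t ht => mem_closedBall_zero_iff.2 (hu2R t (hsub0T (Ico_subset_Icc_self ht))))
        (hvcont.mono hsub0T) (hd' v v' hvd hveq)
        (fun t ht => mem_closedBall_zero_iff.2 (hv2R t (hsub0T (Ico_subset_Icc_self ht))))
        le_rfl
    -- backward in time
    have hbwd : ∀ s ∈ Icc (0:ℝ) T, dist (u (-s)) (v (-s)) ≤ δ * Real.exp (K * (s - 0)) := by
      have hlipneg : LipschitzOnWith K (fun x => -(GG x)) (closedBall 0 (2 * R)) := by
        rw [lipschitzOnWith_iff_dist_le_mul] at lipOn ⊢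
        intro x hx y hy
        simpa [dist_neg_neg] using lipOn x hx y hy
      have hmapsTo : MapsTo (fun s : ℝ => -s) (Icc (0:ℝ) T) (Icc (-T) T) := fun s hs =>
        ⟨by simp only [mem_Icc] at hs ⊢; linarith [hs.2], by
          simp only [mem_Icc] at hs ⊢; linarith [hs.1]⟩
      have hd' : ∀ (w : ℝ → lp (fun _ : ZLat d => ℂ) p)
          (w' : ℝ → lp (fun _ : ZLat d => ℂ) p),
          (∀ t ∈ Icc (-T) T, HasDerivWithinAt w (w' t) (Icc (-T) T) t) →
          (∀ t ∈ Icc (-T) T, w' t = GG (w t)) →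
          ∀ s ∈ Ico (0:ℝ) T, HasDerivWithinAt (fun r => w (-r)) (-(GG (w (-s)))) (Ici s) s := by
        intro w w' hwd hweq s hs
        have hsIcc : (-s) ∈ Icc (-T) T := ⟨by linarith [hs.2], by linarith [hs.1]⟩
        have h1 := hwd (-s) hsIcc
        rw [hweq (-s) hsIcc] at h1
        have h2 : HasDerivWithinAt w (GG (w (-s))) (Iic (-s)) (-s) := by
          refine h1.mono_of_mem_nhdsWithin (Filter.mem_of_superset
            (Icc_mem_nhdsLE_of_mem ⟨by linarith [hs.2], le_rfl⟩)
            (Icc_subset_Icc le_rfl (by linarith [hs.1])))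
        have h3 := h2.scomp s ((hasDerivAt_neg s).hasDerivWithinAt (s := Ici s))
          (fun r hr => by simp only [mem_Iic]; simp only [mem_Ici] at hr; linarith)
        simpa [Function.comp_def] using h3
      exact dist_le_of_trajectories_ODE_of_mem (v := fun _ x => -(GG x))
        (s := fun _ => closedBall 0 (2 * R)) (fun _ _ => hlipneg)
        (hucont.comp continuousOn_neg hmapsTo) (hd' u u' hud hueq)
        (fun s hs => mem_closedBall_zero_iff.2 (hu2R (-s) (hmapsTo (Ico_subset_Icc_self hs))))
        (hvcont.comp continuousOn_neg hmapsTo) (hd' v v' hvd hveq)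
        (fun s hs => mem_closedBall_zero_iff.2 (hv2R (-s) (hmapsTo (Ico_subset_Icc_self hs))))
        (by simp [hδdef])
    -- combine
    intro t ht
    have hδ0 : 0 ≤ δ := dist_nonneg
    have hexp : ∀ s : ℝ, s ≤ T → Real.exp (K * (s - 0)) ≤ L := by
      intro s hs
      rw [hLdef]
      apply Real.exp_le_exp.2
      rw [hKcoe, sub_zero]
      exact mul_le_mul_of_nonneg_left hs hK2
    have hδnorm : δ = ‖u₀ - v₀‖ := by rw [hδdef, hu0, hv0, dist_eq_norm]
    rw [← dist_eq_norm, ← hδnorm]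
    rcases le_total 0 t with h0t | ht0
    · have := hfwd t ⟨h0t, ht.2⟩
      calc dist (u t) (v t) ≤ δ * Real.exp (K * (t - 0)) := this
        _ ≤ L * δ := by
            rw [mul_comm L δ]
            exact mul_le_mul_of_nonneg_left (hexp t ht.2) hδ0
        _ = L * δ := rfl
    · have h1 := hbwd (-t) ⟨by linarith, by linarith [ht.1]⟩
      simp only [neg_neg] at h1
      calc dist (u t) (v t) ≤ δ * Real.exp (K * (-t - 0)) := h1
        _ ≤ L * δ := by
            rw [mul_comm L δ]
            exact mul_le_mul_of_nonneg_left (hexp (-t) (by linarith [ht.1])) hδ0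

end Main

/-- **Local well-posedness of the discrete NLS in `l^p_h`.**
For every bounded real potential `V`, every `σ > 0`, `λ = ±1`, `1 ≤ p ≤ ∞`:
(i)–(ii) for every radius `R` there is a time `T > 0` (depending only on the data and `R`)
such that for every initial datum of norm at most `R` there is a solution on `[−T,T]`,
unique among continuously differentiable `l^p_h`-valued maps; (iii) the solution map is
Lipschitz continuous on balls. -/
theorem dnls_local_wellposedness
    (d : ℕ) (hd : 1 ≤ d) (h : ℝ) (hh : 0 < h) (σ : ℝ) (hσ : 0 < σ)
    (lam : ℝ) (hlam : lam = 1 ∨ lam = -1) (p : ℝ≥0∞) [Fact (1 ≤ p)]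
    (V : ZLat d → ℝ) (CV : ℝ) (hV : ∀ n, |V n| ≤ CV) :
    (∀ R : ℝ, 0 < R → ∃ T : ℝ, 0 < T ∧
      ∀ u₀ : lp (fun _ : ZLat d => ℂ) p, ‖u₀‖ ≤ R →
        (∃ u u' : ℝ → lp (fun _ : ZLat d => ℂ) p,
          IsDNLSSolutionOn d h σ lam V p (Set.Icc (-T) T) u u' ∧ u 0 = u₀) ∧
        (∀ u u' v v' : ℝ → lp (fun _ : ZLat d => ℂ) p,
          IsDNLSSolutionOn d h σ lam V p (Set.Icc (-T) T) u u' →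
          IsDNLSSolutionOn d h σ lam V p (Set.Icc (-T) T) v v' →
          u 0 = u₀ → v 0 = u₀ → Set.EqOn u v (Set.Icc (-T) T)))
    ∧
    (∀ R : ℝ, 0 < R → ∃ T : ℝ, 0 < T ∧ ∃ L : ℝ, 0 < L ∧
      ∀ u₀ v₀ : lp (fun _ : ZLat d => ℂ) p, ‖u₀‖ ≤ R → ‖v₀‖ ≤ R →
        ∀ u u' v v' : ℝ → lp (fun _ : ZLat d => ℂ) p,
          IsDNLSSolutionOn d h σ lam V p (Set.Icc (-T) T) u u' →
          IsDNLSSolutionOn d h σ lam V p (Set.Icc (-T) T) v v' →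
          u 0 = u₀ → v 0 = v₀ →
          ∀ t ∈ Set.Icc (-T) T, ‖u t - v t‖ ≤ L * ‖u₀ - v₀‖) := by
  constructor
  · intro R hR
    obtain ⟨T, hT, L, hL, hex, huniq, _⟩ := master d h hh σ hσ lam hlam p V CV hV R hR
    exact ⟨T, hT, fun u₀ hu₀ => ⟨hex u₀ hu₀, huniq u₀ hu₀⟩⟩
  · intro R hR
    obtain ⟨T, hT, L, hL, _, _, hlip⟩ := master d h hh σ hσ lam hlam p V CV hV R hR
    exact ⟨T, hT, L, hL, hlip⟩
end
end

section
/- A priori l^p bound for solutions of the discrete nonlinear Schrödinger equation: Let d ≥ 1, h > 0, σ > 0, λ ∈ {1,−1}, 1 ≤ p ≤ ∞, and let V = {V_n} ∈ l^∞_h be a bounded real-valued potential. Let u : [0,T) → l^p_h be a continuously differentiable solution of i u_n'(t) − (Δ_h u(t))_n + V_n u_n(t) + λ|u_n(t)|^{2σ} u_n(t) = 0 with u(0) = u_0 ∈ l^p_h. Then for all t ∈ [0,T), ‖u(t)‖_{l^p_h} ≤ e^{2d h^{-2} t} ‖u_0‖_{l^p_h}. -/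
noncomputable section

open scoped ENNReal

section aux
variable {α : Type*} {p : ℝ≥0∞} [Fact (1 ≤ p)]

private lemma memℓp_of_le {f g : α → ℂ} (hf : Memℓp f p) (hle : ∀ i, ‖g i‖ ≤ ‖f i‖) :
    Memℓp g p := by
  rcases p.dichotomy with rfl | hp
  · apply memℓp_infty
    obtain ⟨C, hC⟩ := hf.bddAbove
    exact ⟨C, by rintro - ⟨i, rfl⟩; exact (hle i).trans (hC ⟨i, rfl⟩)⟩
  · have hp0 : 0 < p.toReal := lt_of_lt_of_le one_pos hp
    apply memℓp_gen
    refine Summable.of_nonneg_of_le (fun i => Real.rpow_nonneg (norm_nonneg _) _)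
      (fun i => Real.rpow_le_rpow (norm_nonneg _) (hle i) hp0.le) (hf.summable hp0)

private lemma lp_norm_le_of_le (f g : lp (fun _ : α => ℂ) p) (hle : ∀ i, ‖g i‖ ≤ ‖f i‖) :
    ‖g‖ ≤ ‖f‖ := by
  rcases p.dichotomy with rfl | hp
  · exact lp.norm_le_of_forall_le (norm_nonneg f)
      (fun i => (hle i).trans (lp.norm_apply_le_norm ENNReal.top_ne_zero f i))
  · have hp0 : 0 < p.toReal := lt_of_lt_of_le one_pos hp
    refine lp.norm_le_of_tsum_le hp0 (norm_nonneg f) ?_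
    rw [lp.norm_rpow_eq_tsum hp0 f]
    exact Summable.tsum_le_tsum (fun i => Real.rpow_le_rpow (norm_nonneg _) (hle i) hp0.le)
      ((lp.memℓp g).summable hp0) ((lp.memℓp f).summable hp0)

private lemma memℓp_comp_equiv (e : α ≃ α) {f : α → ℂ} (hf : Memℓp f p) :
    Memℓp (fun i => f (e i)) p := by
  rcases p.dichotomy with rfl | hp
  · apply memℓp_infty
    obtain ⟨C, hC⟩ := hf.bddAbove
    exact ⟨C, by rintro - ⟨i, rfl⟩; exact hC ⟨e i, rfl⟩⟩
  · have hp0 : 0 < p.toReal := lt_of_lt_of_le one_pos hp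
    apply memℓp_gen
    exact (Equiv.summable_iff e).2 (hf.summable hp0)

private lemma lp_norm_comp_equiv_le (e : α ≃ α) (f g : lp (fun _ : α => ℂ) p)
    (hg : ∀ i, g i = f (e i)) : ‖g‖ ≤ ‖f‖ := by
  rcases p.dichotomy with rfl | hp
  · exact lp.norm_le_of_forall_le (norm_nonneg f)
      (fun i => by rw [hg i]; exact lp.norm_apply_le_norm ENNReal.top_ne_zero f (e i))
  · have hp0 : 0 < p.toReal := lt_of_lt_of_le one_pos hp
    refine lp.norm_le_of_tsum_le hp0 (norm_nonneg f) ?_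
    have : ∑' i, ‖g i‖ ^ p.toReal = ∑' i, ‖f (e i)‖ ^ p.toReal := by
      congr 1; ext i; rw [hg i]
    rw [this, lp.norm_rpow_eq_tsum hp0 f]
    exact le_of_eq (e.tsum_eq fun i => ‖f i‖ ^ p.toReal)
end aux

set_option maxHeartbeats 1000000 in
private lemma dnls_slope (d : ℕ) (h : ℝ) (hh : 0 < h) (σ : ℝ) (hσ : 0 < σ)
    (lam : ℝ) (hlam : lam = 1 ∨ lam = -1) (p : ℝ≥0∞) [Fact (1 ≤ p)]
    (V : ZLat d → ℝ) (CV : ℝ) (hV : ∀ n, |V n| ≤ CV)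
    (T : ℝ) (u u' : ℝ → lp (fun _ : ZLat d => ℂ) p)
    (hsol : IsDNLSSolutionOn d h σ lam V p (Set.Ico 0 T) u u')
    (t₀ : ℝ) (ht₀ : t₀ ∈ Set.Ico 0 T) (r : ℝ) (hr : 2 * d / h ^ 2 * ‖u t₀‖ < r) :
    ∃ᶠ z in nhdsWithin t₀ (Set.Ioi t₀), (z - t₀)⁻¹ * (‖u z‖ - ‖u t₀‖) < r := by
  obtain ⟨hderiv, hcont', heq⟩ := hsol
  set K : ℝ := 2 * d / h ^ 2 with hKdef
  have hK0 : 0 ≤ K := by positivity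
  set U := u t₀ with hU
  set M : ℝ := ‖U‖ with hM
  have hM0 : 0 ≤ M := norm_nonneg _
  set b : ZLat d → ℝ := fun n => V n + lam * (‖(U : ZLat d → ℂ) n‖ ^ (2 * σ)) + K
    with hbdef
  have hCV0 : 0 ≤ CV := le_trans (abs_nonneg _) (hV (Classical.arbitrary _))
  set B : ℝ := CV + M ^ (2 * σ) + K with hBdef
  have hB0 : 0 ≤ B := by positivity
  have habs : ∀ n, ‖(U : ZLat d → ℂ) n‖ = ‖(U : ZLat d → ℂ) n‖ := fun n => rfl
  have hbB : ∀ n, |b n| ≤ B := by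
    intro n
    have h1 : |lam| = 1 := by rcases hlam with rfl | rfl <;> simp
    have h2 : ‖(U : ZLat d → ℂ) n‖ ^ (2 * σ) ≤ M ^ (2 * σ) := by
      refine Real.rpow_le_rpow (norm_nonneg _) ?_ (by positivity)
      rw [habs]
      exact lp.norm_apply_le_norm (zero_lt_one.trans_le Fact.out).ne' U n
    have h3 : |lam * (‖(U : ZLat d → ℂ) n‖ ^ (2 * σ))| ≤ M ^ (2 * σ) := by
      rw [abs_mul, h1, one_mul, abs_of_nonneg (Real.rpow_nonneg (norm_nonneg _) _)]
      exact h2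
    calc |b n| ≤ |V n + lam * (‖(U : ZLat d → ℂ) n‖ ^ (2 * σ))| + |K| := abs_add_le _ _
      _ ≤ (|V n| + |lam * (‖(U : ZLat d → ℂ) n‖ ^ (2 * σ))|) + |K| := by
          gcongr; exact abs_add_le _ _
      _ ≤ B := by
          rw [abs_of_nonneg hK0, hBdef]
          gcongr
          exact hV n
  set wf : ℝ → ZLat d → ℂ :=
    fun s n => Complex.exp (((b n * (s - t₀) : ℝ) : ℂ) * Complex.I) * (U : ZLat d → ℂ) n
    with hwf
  have hwfnorm : ∀ s n, ‖wf s n‖ = ‖(U : ZLat d → ℂ) n‖ := by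
    intro s n
    rw [hwf]
    simp only [norm_mul, Complex.norm_exp_ofReal_mul_I, one_mul]
  have hwmem : ∀ s, Memℓp (wf s) p :=
    fun s => memℓp_of_le (lp.memℓp U) (fun n => (hwfnorm s n).le)
  set w : ℝ → lp (fun _ : ZLat d => ℂ) p := fun s => ⟨wf s, hwmem s⟩ with hwdef
  have hw_coe : ∀ s n, (w s : ZLat d → ℂ) n = wf s n := fun s n => rfl
  have hw_t₀ : w t₀ = U := by
    apply lp.ext
    funext n
    show wf t₀ n = (U : ZLat d → ℂ) n
    rw [hwf]
    simp
  have hwnorm : ∀ s, ‖w s‖ = M := fun s =>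
    le_antisymm (lp_norm_le_of_le U (w s) fun n => (hwfnorm s n).le)
      (lp_norm_le_of_le (w s) U fun n => (hwfnorm s n).ge)
  have hw'mem : Memℓp (fun n => Complex.I * (b n : ℂ) * (U : ZLat d → ℂ) n) p := by
    refine memℓp_of_le ((lp.memℓp U).const_mul (B : ℂ)) fun n => ?_
    rw [norm_mul, norm_mul, norm_mul, Complex.norm_I, one_mul, Complex.norm_real,
      Complex.norm_real, Real.norm_eq_abs, Real.norm_eq_abs, abs_of_nonneg hB0]
    exact mul_le_mul_of_nonneg_right (hbB n) (norm_nonneg _)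
  set w' : lp (fun _ : ZLat d => ℂ) p :=
    ⟨fun n => Complex.I * (b n : ℂ) * (U : ZLat d → ℂ) n, hw'mem⟩ with hw'def
  have hw'_coe : ∀ n, (w' : ZLat d → ℂ) n = Complex.I * (b n : ℂ) * (U : ZLat d → ℂ) n :=
    fun n => rfl
  -- quadratic estimate for the remainder
  have hquad : ∀ s : ℝ, |s - t₀| * B ≤ 1 →
      ‖w s - w t₀ - (s - t₀) • w'‖ ≤ (s - t₀) ^ 2 * B ^ 2 * M := by
    intro s hs
    have key : ∀ n, ‖(w s - w t₀ - (s - t₀) • w' : lp (fun _ : ZLat d => ℂ) p) n‖ ≤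
        ‖((((s - t₀) ^ 2 * B ^ 2 : ℝ) : ℂ) • U : lp (fun _ : ZLat d => ℂ) p) n‖ := by
      intro n
      have hcoe : (w s - w t₀ - (s - t₀) • w' : lp (fun _ : ZLat d => ℂ) p) n
          = (Complex.exp (((b n * (s - t₀) : ℝ) : ℂ) * Complex.I) - 1
              - ((b n * (s - t₀) : ℝ) : ℂ) * Complex.I) * (U : ZLat d → ℂ) n := by
        rw [lp.coeFn_sub, lp.coeFn_sub, lp.coeFn_smul, Pi.sub_apply, Pi.sub_apply,
          Pi.smul_apply]
        rw [hw_coe s n, hw_coe t₀ n, hw'_coe n, hwf]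
        simp only [sub_self, mul_zero, Complex.ofReal_zero, zero_mul, Complex.exp_zero]
        rw [Complex.real_smul]
        push_cast
        ring
      rw [hcoe, lp.coeFn_smul, Pi.smul_apply, smul_eq_mul, norm_mul, norm_mul]
      refine mul_le_mul_of_nonneg_right ?_ (norm_nonneg _)
      have hz : ‖(((b n * (s - t₀) : ℝ) : ℂ) * Complex.I)‖ ≤ 1 := by
        rw [norm_mul, Complex.norm_I, mul_one, Complex.norm_real, Real.norm_eq_abs, abs_mul]
        calc |b n| * |s - t₀| ≤ B * |s - t₀| :=
              mul_le_mul_of_nonneg_right (hbB n) (abs_nonneg _)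
          _ = |s - t₀| * B := mul_comm _ _
          _ ≤ 1 := hs
      have hest := Complex.norm_exp_sub_one_sub_id_le hz
      calc ‖(Complex.exp (((b n * (s - t₀) : ℝ) : ℂ) * Complex.I) - 1
              - ((b n * (s - t₀) : ℝ) : ℂ) * Complex.I)‖
          ≤ ‖(((b n * (s - t₀) : ℝ) : ℂ) * Complex.I)‖ ^ 2 := hest
        _ = (|b n| * |s - t₀|) ^ 2 := by
            rw [norm_mul, Complex.norm_I, mul_one, Complex.norm_real, Real.norm_eq_abs, abs_mul]
        _ ≤ (B * |s - t₀|) ^ 2 := by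
            gcongr
            exact hbB n
        _ = |((s - t₀) ^ 2 * B ^ 2 : ℝ)| := by
            rw [abs_of_nonneg (by positivity : (0:ℝ) ≤ (s - t₀) ^ 2 * B ^ 2)]
            rw [mul_pow, sq_abs]
            ring
        _ = ‖(((s - t₀) ^ 2 * B ^ 2 : ℝ) : ℂ)‖ := by rw [Complex.norm_real, Real.norm_eq_abs]
    calc ‖w s - w t₀ - (s - t₀) • w'‖
        ≤ ‖((((s - t₀) ^ 2 * B ^ 2 : ℝ) : ℂ) • U : lp (fun _ : ZLat d => ℂ) p)‖ :=
          lp_norm_le_of_le _ _ key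
      _ = (s - t₀) ^ 2 * B ^ 2 * M := by
          rw [norm_smul, Complex.norm_real, Real.norm_eq_abs,
            abs_of_nonneg (by positivity : (0:ℝ) ≤ (s - t₀) ^ 2 * B ^ 2), hM]
  have hwderiv : HasDerivAt w w' t₀ := by
    rw [hasDerivAt_iff_isLittleO]
    rw [Asymptotics.isLittleO_iff]
    intro c hc
    have hδ : 0 < min (1 / (B + 1)) (c / (B ^ 2 * M + 1)) := by positivity
    filter_upwards [Metric.eventually_nhds_iff.mpr
      ⟨min (1 / (B + 1)) (c / (B ^ 2 * M + 1)), hδ, fun {y} hy => hy⟩] with s hs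
    rw [Real.dist_eq] at hs
    have hs1 : |s - t₀| ≤ 1 / (B + 1) := le_of_lt (lt_of_lt_of_le hs (min_le_left _ _))
    have hs2 : |s - t₀| ≤ c / (B ^ 2 * M + 1) := le_of_lt (lt_of_lt_of_le hs (min_le_right _ _))
    have hsB : |s - t₀| * B ≤ 1 := by
      have h1' := (le_div_iff₀ (by positivity : (0:ℝ) < B + 1)).1 hs1
      nlinarith [abs_nonneg (s - t₀)]
    calc ‖w s - w t₀ - (s - t₀) • w'‖ ≤ (s - t₀) ^ 2 * B ^ 2 * M := hquad s hsB
      _ ≤ c * ‖s - t₀‖ := by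
          rw [Real.norm_eq_abs]
          have h2' := (le_div_iff₀ (by positivity : (0:ℝ) < B ^ 2 * M + 1)).1 hs2
          have hx0 : (0:ℝ) ≤ |s - t₀| := abs_nonneg _
          have e1 : (s - t₀) ^ 2 * B ^ 2 * M = |s - t₀| * (|s - t₀| * (B ^ 2 * M)) := by
            rw [← sq_abs]; ring
          rw [e1]
          have e2 : |s - t₀| * (B ^ 2 * M) ≤ c := by nlinarith
          calc |s - t₀| * (|s - t₀| * (B ^ 2 * M)) ≤ |s - t₀| * c :=
                mul_le_mul_of_nonneg_left e2 hx0
            _ = c * |s - t₀| := mul_comm _ _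
  have hh0 : (h : ℂ) ≠ 0 := by exact_mod_cast hh.ne'
  set g : lp (fun _ : ZLat d => ℂ) p := u' t₀ - w' with hgdef
  have hg_pt : ∀ n, (g : ZLat d → ℂ) n =
      (-Complex.I / (h : ℂ) ^ 2) *
        (∑ j : Fin d, ((U : ZLat d → ℂ) (n + latE j) + (U : ZLat d → ℂ) (n - latE j))) := by
    intro n
    have hE := heq t₀ ht₀ n
    simp only [discLapC] at hE
    have hsum : (∑ j : Fin d, ((U : ZLat d → ℂ) (n + latE j) + (U : ZLat d → ℂ) (n - latE j)
          - 2 * (U : ZLat d → ℂ) n))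
        = (∑ j : Fin d, ((U : ZLat d → ℂ) (n + latE j) + (U : ZLat d → ℂ) (n - latE j)))
          - 2 * (d : ℂ) * (U : ZLat d → ℂ) n := by
      rw [Finset.sum_sub_distrib, Finset.sum_const, Finset.card_univ, Fintype.card_fin]
      push_cast
      ring
    rw [hsum] at hE
    rw [hgdef, lp.coeFn_sub, Pi.sub_apply, hw'_coe n]
    have hbc : ((b n : ℝ) : ℂ) = (V n : ℂ)
        + (lam : ℂ) * ((‖(U : ZLat d → ℂ) n‖ ^ (2 * σ) : ℝ) : ℂ)
        + 2 * (d : ℂ) / (h : ℂ) ^ 2 := by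
      rw [hbdef]
      push_cast [hKdef]
      ring
    rw [hbc]
    linear_combination (-Complex.I) * hE + ((u' t₀ : ZLat d → ℂ) n) * Complex.I_sq
  have hg_norm : ‖g‖ ≤ K * M := by
    set Sp : Fin d → lp (fun _ : ZLat d => ℂ) p := fun j =>
      ⟨fun n => (U : ZLat d → ℂ) (n + latE j),
        memℓp_comp_equiv (Equiv.addRight (latE j)) (lp.memℓp U)⟩ with hSp
    set Sm : Fin d → lp (fun _ : ZLat d => ℂ) p := fun j =>
      ⟨fun n => (U : ZLat d → ℂ) (n - latE j),
        memℓp_comp_equiv (Equiv.subRight (latE j)) (lp.memℓp U)⟩ with hSm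
    have hSpn : ∀ j, ‖Sp j‖ ≤ M :=
      fun j => lp_norm_comp_equiv_le (Equiv.addRight (latE j)) U (Sp j) (fun n => rfl)
    have hSmn : ∀ j, ‖Sm j‖ ≤ M :=
      fun j => lp_norm_comp_equiv_le (Equiv.subRight (latE j)) U (Sm j) (fun n => rfl)
    have hgeq : g = ((-Complex.I) / (h : ℂ) ^ 2) • (∑ j : Fin d, (Sp j + Sm j)) := by
      apply lp.ext
      funext n
      rw [hg_pt n, lp.coeFn_smul, Pi.smul_apply, lp.coeFn_sum, Finset.sum_apply, smul_eq_mul]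
      congr 1
    rw [hgeq, norm_smul]
    have hnc : ‖(-Complex.I) / (h : ℂ) ^ 2‖ = 1 / h ^ 2 := by
      rw [norm_div, norm_neg, Complex.norm_I, norm_pow, Complex.norm_real, Real.norm_eq_abs,
        abs_of_pos hh]
    rw [hnc]
    have hsumle : ‖∑ j : Fin d, (Sp j + Sm j)‖ ≤ (d : ℝ) * (2 * M) := by
      refine (norm_sum_le _ _).trans ?_
      calc (∑ j : Fin d, ‖Sp j + Sm j‖) ≤ ∑ j : Fin d, (2 * M) := by
            refine Finset.sum_le_sum fun j _ => ?_
            calc ‖Sp j + Sm j‖ ≤ ‖Sp j‖ + ‖Sm j‖ := norm_add_le _ _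
              _ ≤ 2 * M := by linarith [hSpn j, hSmn j]
        _ = (d : ℝ) * (2 * M) := by
            rw [Finset.sum_const, Finset.card_univ, Fintype.card_fin, nsmul_eq_mul]
    calc 1 / h ^ 2 * ‖∑ j : Fin d, (Sp j + Sm j)‖ ≤ 1 / h ^ 2 * ((d : ℝ) * (2 * M)) :=
          mul_le_mul_of_nonneg_left hsumle (by positivity)
      _ = K * M := by rw [hKdef]; field_simp
  -- derivatives within `Ici t₀`
  have hu_deriv : HasDerivWithinAt u (u' t₀) (Set.Ici t₀) t₀ := by
    refine (hderiv t₀ ht₀).mono_of_mem_nhdsWithin ?_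
    have hmem : Set.Ici t₀ ∩ Set.Iio T ∈ nhdsWithin t₀ (Set.Ici t₀) :=
      Filter.inter_mem self_mem_nhdsWithin (mem_nhdsWithin_of_mem_nhds (Iio_mem_nhds ht₀.2))
    exact Filter.mem_of_superset hmem (fun x hx => ⟨le_trans ht₀.1 hx.1, hx.2⟩)
  have hφ : HasDerivWithinAt (fun s => u s - w s) g (Set.Ici t₀) t₀ := by
    rw [hgdef]
    exact hu_deriv.sub hwderiv.hasDerivWithinAt
  have hgr : ‖g‖ < r := lt_of_le_of_lt hg_norm hr
  have hfreq := hφ.liminf_right_slope_norm_le hgr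
  refine (hfreq.and_eventually self_mem_nhdsWithin).mono ?_
  rintro z ⟨hz1, hz2⟩
  have hz3 : 0 ≤ (z - t₀)⁻¹ := inv_nonneg.2 (sub_nonneg.2 (le_of_lt hz2))
  have h1 : ‖u z‖ - ‖u t₀‖ ≤ ‖u z - w z‖ - ‖u t₀ - w t₀‖ := by
    have h2 : ‖u z‖ ≤ ‖u z - w z‖ + ‖w z‖ := by
      calc ‖u z‖ = ‖(u z - w z) + w z‖ := by rw [sub_add_cancel]
        _ ≤ ‖u z - w z‖ + ‖w z‖ := norm_add_le _ _
    have h3 : ‖w z‖ = ‖u t₀‖ := by rw [hwnorm z, hM, hU]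
    have h4 : u t₀ - w t₀ = 0 := by rw [hw_t₀]; exact sub_self U
    rw [h4, norm_zero]
    linarith
  refine lt_of_le_of_lt ?_ hz1
  calc (z - t₀)⁻¹ * (‖u z‖ - ‖u t₀‖)
      ≤ (z - t₀)⁻¹ * (‖u z - w z‖ - ‖u t₀ - w t₀‖) := mul_le_mul_of_nonneg_left h1 hz3
    _ = (z - t₀)⁻¹ * (‖(fun s => u s - w s) z‖ - ‖(fun s => u s - w s) t₀‖) := rfl

/-- **A priori `l^p` bound for solutions of the discrete NLS.**
Any continuously differentiable solution of the discrete nonlinear Schrödinger equation on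
`[0,T)` with bounded potential satisfies `‖u(t)‖_{l^p_h} ≤ e^{2d h⁻² t} ‖u(0)‖_{l^p_h}`. -/
theorem dnls_apriori_lp_bound
    (d : ℕ) (hd : 1 ≤ d) (h : ℝ) (hh : 0 < h) (σ : ℝ) (hσ : 0 < σ)
    (lam : ℝ) (hlam : lam = 1 ∨ lam = -1) (p : ℝ≥0∞) [Fact (1 ≤ p)]
    (V : ZLat d → ℝ) (CV : ℝ) (hV : ∀ n, |V n| ≤ CV)
    (T : ℝ) (hT : 0 < T) (u u' : ℝ → lp (fun _ : ZLat d => ℂ) p)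
    (hsol : IsDNLSSolutionOn d h σ lam V p (Set.Ico 0 T) u u')
    (u₀ : lp (fun _ : ZLat d => ℂ) p) (hu0 : u 0 = u₀) :
    ∀ t ∈ Set.Ico (0 : ℝ) T, ‖u t‖ ≤ Real.exp (2 * d * t / h ^ 2) * ‖u₀‖ := by
  intro t ht
  have hsub : Set.Icc (0 : ℝ) t ⊆ Set.Ico 0 T := fun s hs => ⟨hs.1, lt_of_le_of_lt hs.2 ht.2⟩
  have hcont : ContinuousOn (fun s => ‖u s‖) (Set.Icc 0 t) := by
    apply continuous_norm.comp_continuousOn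
    intro s hs
    exact ((hsol.1 s (hsub hs)).continuousWithinAt).mono hsub
  have key : ∀ x ∈ Set.Ico (0 : ℝ) t, ∀ r : ℝ, 2 * d / h ^ 2 * ‖u x‖ < r →
      ∃ᶠ z in nhdsWithin x (Set.Ioi x), (z - x)⁻¹ * (‖u z‖ - ‖u x‖) < r :=
    fun x hx r hr => dnls_slope d h hh σ hσ lam hlam p V CV hV T u u' hsol x
      ⟨hx.1, lt_trans hx.2 ht.2⟩ r hr
  have hb := le_gronwallBound_of_liminf_deriv_right_le
    (f := fun s => ‖u s‖) (f' := fun s => 2 * d / h ^ 2 * ‖u s‖)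
    (δ := ‖u₀‖) (K := 2 * d / h ^ 2) (ε := 0) (a := 0) (b := t)
    hcont (fun x hx r hr => key x hx r hr) (by simp only [hu0]; exact le_refl _)
    (fun x _ => by simp) t ⟨ht.1, le_refl t⟩
  rw [sub_zero, gronwallBound_ε0] at hb
  calc ‖u t‖ ≤ ‖u₀‖ * Real.exp (2 * d / h ^ 2 * t) := hb
    _ = Real.exp (2 * d * t / h ^ 2) * ‖u₀‖ := by
        rw [mul_comm]
        congr 1
        ring
end
end
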